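/- arXiv:2010.13299 — 5 statements merged into one kernel-verified Lean document; each statement's English description precedes it below -/
import Mathlib

section
/- Let H ∈ ℝ^{d×d} be invertible, R, P ∈ ℝ^{d×d} symmetric positive definite, and K = P H^T (H P H^T + R)^{-1}. Then the spectral radius of I - K H is strictly less than 1, and consequently the iteration u_{i+1} = (I - KH) u_i + K y converges to the unique solution u* of y = Hu as i → ∞. -/
open Matrix Filter
open scoped MatrixOrder

lemma aux_isUnit_sqrt {d : ℕ} (P : Matrix (Fin d) (Fin d) ℝ) (hP : P.PosDef) :
    IsUnit (CFC.sqrt P) := by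
  rw [Matrix.isUnit_iff_isUnit_det, isUnit_iff_ne_zero]
  intro h
  have h2 : CFC.sqrt P * CFC.sqrt P = P := CFC.sqrt_mul_sqrt_self P hP.posSemidef.nonneg
  have := congrArg Matrix.det h2
  rw [Matrix.det_mul, h, mul_zero] at this
  exact hP.det_pos.ne this

lemma aux_conj_posdef {d : ℕ} (S N : Matrix (Fin d) (Fin d) ℝ) (hS : S.PosDef)
    (hN : IsUnit N) : (Nᵀ * S * N).PosDef := by
  refine Matrix.PosDef.of_dotProduct_mulVec_pos ?_ ?_
  · show (Nᵀ * S * N)ᴴ = _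
    rw [conjTranspose_mul, conjTranspose_mul, hS.isHermitian.eq,
      conjTranspose_eq_transpose_of_trivial, conjTranspose_eq_transpose_of_trivial,
      transpose_transpose, Matrix.mul_assoc]
  · intro x hx
    have hx' : N *ᵥ x ≠ 0 := by
      intro h
      exact hx (Matrix.mulVec_injective_iff_isUnit.mpr hN (by simpa using h))
    have := hS.dotProduct_mulVec_pos hx'
    simpa [Matrix.dotProduct_mulVec, ← Matrix.mulVec_mulVec, Matrix.vecMul_transpose,
      Matrix.mul_assoc] using this

lemma aux_one_sub_posdef {d : ℕ} (R N : Matrix (Fin d) (Fin d) ℝ) (hR : R.PosDef)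
    (hA : (Nᵀ * (N * Nᵀ + R)⁻¹ * N).IsHermitian) :
    (1 - Nᵀ * (N * Nᵀ + R)⁻¹ * N).PosDef := by
  set S : Matrix (Fin d) (Fin d) ℝ := N * Nᵀ + R with hSdef
  have hSpd : S.PosDef := by
    have h1 : (N * Nᵀ).PosSemidef := by
      have := Matrix.posSemidef_self_mul_conjTranspose N
      rwa [conjTranspose_eq_transpose_of_trivial] at this
    exact Matrix.PosDef.posSemidef_add h1 hR
  have hSdet : IsUnit S.det := (Matrix.isUnit_iff_isUnit_det S).mp hSpd.isUnit
  refine Matrix.PosDef.of_dotProduct_mulVec_pos ?_ ?_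
  · show _ = _
    rw [conjTranspose_sub, hA.eq, conjTranspose_one]
  · intro x hx
    set w : Fin d → ℝ := N *ᵥ x with hw
    set v : Fin d → ℝ := S⁻¹ *ᵥ w with hv
    have hSv : S *ᵥ v = w := by
      rw [hv, Matrix.mulVec_mulVec, Matrix.mul_nonsing_inv S hSdet, Matrix.one_mulVec]
    set a : ℝ := x ⬝ᵥ ((Nᵀ * S⁻¹ * N) *ᵥ x) with haa
    have ha1 : a = w ⬝ᵥ v := by
      rw [haa, hw, hv]
      rw [Matrix.mul_assoc, ← Matrix.mulVec_mulVec, Matrix.dotProduct_mulVec,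
        Matrix.vecMul_transpose, ← Matrix.mulVec_mulVec]
    have ha2 : a = (Nᵀ *ᵥ v) ⬝ᵥ (Nᵀ *ᵥ v) + v ⬝ᵥ (R *ᵥ v) := by
      rw [ha1, ← hSv, hSdef, Matrix.add_mulVec, add_dotProduct]
      congr 1
      · rw [← Matrix.mulVec_mulVec, dotProduct_comm, Matrix.dotProduct_mulVec,
          ← Matrix.mulVec_transpose]
      · exact dotProduct_comm _ _
    have ha3 : a = (Nᵀ *ᵥ v) ⬝ᵥ x := by
      rw [ha1, dotProduct_comm, hw, Matrix.dotProduct_mulVec,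
        ← Matrix.mulVec_transpose]
    have hxx : 0 < x ⬝ᵥ x := by
      have := (Matrix.PosDef.one (n := Fin d) (R := ℝ)).dotProduct_mulVec_pos hx
      simpa using this
    have key : a < x ⬝ᵥ x := by
      by_cases hv0 : v = 0
      · rw [ha1, hv0, dotProduct_zero]; exact hxx
      · have hRv : 0 < v ⬝ᵥ (R *ᵥ v) := by
          have := hR.dotProduct_mulVec_pos hv0; simpa using this
        have hb : 0 ≤ (Nᵀ *ᵥ v) ⬝ᵥ (Nᵀ *ᵥ v) :=
          Finset.sum_nonneg fun i _ => mul_self_nonneg _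
        have hba : (Nᵀ *ᵥ v) ⬝ᵥ (Nᵀ *ᵥ v) < a := by rw [ha2]; linarith
        have ha0 : 0 < a := lt_of_le_of_lt hb hba
        have hcs : a ^ 2 ≤ ((Nᵀ *ᵥ v) ⬝ᵥ (Nᵀ *ᵥ v)) * (x ⬝ᵥ x) := by
          rw [ha3]
          simpa [dotProduct, sq] using
            Finset.sum_mul_sq_le_sq_mul_sq Finset.univ (Nᵀ *ᵥ v) x
        nlinarith
    have hcx : x ⬝ᵥ ((1 - Nᵀ * S⁻¹ * N) *ᵥ x) = x ⬝ᵥ x - a := by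
      rw [Matrix.sub_mulVec, Matrix.one_mulVec, dotProduct_sub, haa]
    rw [show star x = x from star_trivial x, hcx]
    linarith

lemma aux_sandwich_pow {d : ℕ} (U D V : Matrix (Fin d) (Fin d) ℝ)
    (h1 : V * U = 1) (h2 : U * V = 1) :
    ∀ i : ℕ, (U * D * V) ^ i = U * D ^ i * V := by
  have hcan : ∀ X : Matrix (Fin d) (Fin d) ℝ, V * (U * X) = X := fun X => by
    rw [← Matrix.mul_assoc, h1, Matrix.one_mul]
  intro i
  induction i with
  | zero => simpa using h2.symm
  | succ i ih =>
      rw [pow_succ, pow_succ, ih]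
      calc U * D ^ i * V * (U * D * V)
          = U * (D ^ i * (D * V)) := by simp only [Matrix.mul_assoc, hcan]
        _ = U * (D ^ i * D) * V := by simp only [Matrix.mul_assoc]

theorem stmt_6 {d : ℕ} (R P H : Matrix (Fin d) (Fin d) ℝ)
    (hR : R.PosDef) (hP : P.PosDef) (hH : IsUnit H)
    (K : Matrix (Fin d) (Fin d) ℝ) (hK : K = P * Hᵀ * (H * P * Hᵀ + R)⁻¹)
    (y : Fin d → ℝ) (u : ℕ → Fin d → ℝ)
    (hrec : ∀ i, u (i + 1) = (1 - K * H) *ᵥ u i + K *ᵥ y) :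
    (∀ z ∈ spectrum ℂ ((1 - K * H).map (algebraMap ℝ ℂ)), ‖z‖ < 1) ∧
    (∀ ustar : Fin d → ℝ, H *ᵥ ustar = y →
      Tendsto u atTop (nhds ustar)) := by
  classical
  set T : Matrix (Fin d) (Fin d) ℝ := CFC.sqrt P with hTdef
  have hT2 : T * T = P := CFC.sqrt_mul_sqrt_self P hP.posSemidef.nonneg
  have hTherm : T.IsHermitian := (CFC.sqrt_nonneg P).posSemidef.isHermitian
  have hTt : Tᵀ = T := by
    rw [← conjTranspose_eq_transpose_of_trivial]; exact hTherm
  have hTunit : IsUnit T := aux_isUnit_sqrt P hP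
  have hTdet : IsUnit T.det := (Matrix.isUnit_iff_isUnit_det T).mp hTunit
  set N : Matrix (Fin d) (Fin d) ℝ := H * T with hNdef
  have hNt : Nᵀ = T * Hᵀ := by rw [hNdef, transpose_mul, hTt]
  have hNunit : IsUnit N := hH.mul hTunit
  have hNNt : N * Nᵀ = H * P * Hᵀ := by
    rw [hNt, hNdef, ← hT2]; simp only [Matrix.mul_assoc]
  set S : Matrix (Fin d) (Fin d) ℝ := H * P * Hᵀ + R with hSdef
  have hSN : S = N * Nᵀ + R := by rw [hSdef, hNNt]
  have hSpd : S.PosDef := by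
    have h1 : (H * P * Hᵀ).PosSemidef := by
      have := hP.posSemidef.mul_mul_conjTranspose_same H
      rwa [conjTranspose_eq_transpose_of_trivial] at this
    exact Matrix.PosDef.posSemidef_add h1 hR
  set A : Matrix (Fin d) (Fin d) ℝ := Nᵀ * S⁻¹ * N with hAdef
  have hApd : A.PosDef := aux_conj_posdef S⁻¹ N hSpd.inv hNunit
  set C : Matrix (Fin d) (Fin d) ℝ := 1 - A with hCdef
  have hCpd : C.PosDef := by
    rw [hCdef, hAdef, hSN]
    exact aux_one_sub_posdef R N hR (by rw [← hSN]; exact hApd.isHermitian)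
  have hKH : K * H = P * Hᵀ * S⁻¹ * H := by rw [hK, hSdef]
  have hBT : (1 - K * H) * T = T * C := by
    rw [hCdef, Matrix.sub_mul, Matrix.one_mul, Matrix.mul_sub, Matrix.mul_one]
    congr 1
    rw [hKH, hAdef, hNt, hNdef, ← hT2]
    simp only [Matrix.mul_assoc]
  -- spectral theorem data for C
  have hCh : C.IsHermitian := hCpd.isHermitian
  set μ : Fin d → ℝ := hCh.eigenvalues with hμdef
  set U : Matrix (Fin d) (Fin d) ℝ := (hCh.eigenvectorUnitary : Matrix (Fin d) (Fin d) ℝ)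
    with hUdef
  have hU1 : star U * U = 1 := by
    rw [hUdef]; exact (Unitary.mem_iff.mp hCh.eigenvectorUnitary.2).1
  have hU2 : U * star U = 1 := by
    rw [hUdef]; exact (Unitary.mem_iff.mp hCh.eigenvectorUnitary.2).2
  have hspec : C = U * diagonal μ * star U := by
    have h := hCh.spectral_theorem
    simpa using h
  have hμpos : ∀ i, 0 < μ i := fun i => hCpd.eigenvalues_pos i
  have hμlt1 : ∀ i, μ i < 1 := by
    intro i
    set v : Fin d → ℝ := ⇑(hCh.eigenvectorBasis i) with hvdef
    have hv : C *ᵥ v = μ i • v := hCh.mulVec_eigenvectorBasis i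
    have hvne : v ≠ 0 := by
      intro h
      exact hCh.eigenvectorBasis.orthonormal.ne_zero i (by ext j; exact congrFun h j)
    have hAv : A *ᵥ v = (1 - μ i) • v := by
      have hcv : C *ᵥ v = v - A *ᵥ v := by
        rw [hCdef, Matrix.sub_mulVec, Matrix.one_mulVec]
      rw [hcv] at hv
      have : A *ᵥ v = v - μ i • v := by
        rw [← hv]; abel
      rw [this, sub_smul, one_smul]
    have hq := hApd.dotProduct_mulVec_pos hvne
    rw [star_trivial, hAv, dotProduct_smul, smul_eq_mul] at hq
    have hvv : 0 < v ⬝ᵥ v := by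
      have := (Matrix.PosDef.one (n := Fin d) (R := ℝ)).dotProduct_mulVec_pos hvne
      simpa using this
    nlinarith
  constructor
  · -- spectrum part
    intro z hz
    set ψ : Matrix (Fin d) (Fin d) ℝ →+* Matrix (Fin d) (Fin d) ℂ :=
      (algebraMap ℝ ℂ).mapMatrix with hψdef
    have hmap : (1 - K * H).map (algebraMap ℝ ℂ) = ψ (1 - K * H) := rfl
    have hgT : IsUnit (ψ T) := hTunit.map ψ
    set gT : (Matrix (Fin d) (Fin d) ℂ)ˣ := hgT.unit with hgTdef
    set gU : (Matrix (Fin d) (Fin d) ℂ)ˣ :=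
      ⟨ψ U, ψ (star U), by rw [← _root_.map_mul, hU2, _root_.map_one], by rw [← _root_.map_mul, hU1, _root_.map_one]⟩
      with hgUdef
    have h1 : ψ (1 - K * H) = (gT : Matrix (Fin d) (Fin d) ℂ) * ψ C * ((gT⁻¹ : (Matrix (Fin d) (Fin d) ℂ)ˣ) : Matrix (Fin d) (Fin d) ℂ) := by
      rw [Units.eq_mul_inv_iff_mul_eq]
      rw [hgTdef, IsUnit.unit_spec, ← _root_.map_mul, ← _root_.map_mul, hBT]
    have h2 : ψ C = (gU : Matrix (Fin d) (Fin d) ℂ) * (diagonal ((algebraMap ℝ ℂ) ∘ μ)) * ((gU⁻¹ : (Matrix (Fin d) (Fin d) ℂ)ˣ) : Matrix (Fin d) (Fin d) ℂ) := by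
      have h := congrArg ψ hspec
      rw [_root_.map_mul, _root_.map_mul] at h
      rw [h]
      congr 1
      · congr 1
        exact (RingHom.mapMatrix_apply _ _).trans (Matrix.diagonal_map (map_zero _))
    rw [hmap, h1, spectrum.units_conjugate, h2, spectrum.units_conjugate,
      spectrum_diagonal] at hz
    obtain ⟨i, rfl⟩ := hz
    have hn : ‖(algebraMap ℝ ℂ) (μ i)‖ = |μ i| := by
      simp [Real.norm_eq_abs]
    rw [Function.comp_apply, hn]
    exact abs_lt.mpr ⟨by linarith [hμpos i], hμlt1 i⟩
  · -- convergence part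
    intro ustar hus
    have hB1 : (1 - K * H) = T * (U * diagonal μ * star U) * T⁻¹ := by
      calc (1 - K * H) = (1 - K * H) * T * T⁻¹ :=
            (Matrix.mul_nonsing_inv_cancel_right T (1 - K * H) hTdet).symm
        _ = T * (U * diagonal μ * star U) * T⁻¹ := by rw [hBT, hspec]
    have hBdiag : ∀ i : ℕ,
        (1 - K * H) ^ i = (T * U) * diagonal (fun l => μ l ^ i) * (star U * T⁻¹) := by
      intro i
      have hre : (1 - K * H) = (T * U) * diagonal μ * (star U * T⁻¹) := by
        rw [hB1]; simp only [Matrix.mul_assoc]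
      have hVU : (star U * T⁻¹) * (T * U) = 1 := by
        rw [Matrix.mul_assoc, ← Matrix.mul_assoc T⁻¹, Matrix.nonsing_inv_mul T hTdet,
          Matrix.one_mul, hU1]
      have hUV : (T * U) * (star U * T⁻¹) = 1 := by
        rw [Matrix.mul_assoc, ← Matrix.mul_assoc U, hU2, Matrix.one_mul,
          Matrix.mul_nonsing_inv T hTdet]
      rw [hre, aux_sandwich_pow _ _ _ hVU hUV i, Matrix.diagonal_pow]
      rfl
    set e : Fin d → ℝ := u 0 - ustar with hedef
    have hfix : (1 - K * H) *ᵥ ustar + K *ᵥ y = ustar := by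
      rw [Matrix.sub_mulVec, Matrix.one_mulVec, ← Matrix.mulVec_mulVec, hus]
      abel
    have hu_closed : ∀ i, u i = (1 - K * H) ^ i *ᵥ e + ustar := by
      intro i
      induction i with
      | zero => rw [pow_zero, Matrix.one_mulVec, hedef]; abel
      | succ i ih =>
          rw [hrec i, ih, Matrix.mulVec_add, Matrix.mulVec_mulVec, add_assoc, hfix,
            ← pow_succ']
    have hconv : Tendsto (fun i : ℕ => (1 - K * H) ^ i *ᵥ e) atTop (nhds 0) := by
      rw [tendsto_pi_nhds]
      intro j
      have hentry : ∀ i : ℕ, ((1 - K * H) ^ i *ᵥ e) j =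
          ∑ k, (∑ l, (T * U) j l * μ l ^ i * (star U * T⁻¹) l k) * e k := by
        intro i
        rw [hBdiag i]
        simp only [Matrix.mulVec, dotProduct]
        refine Finset.sum_congr rfl fun k _ => ?_
        congr 1
        rw [Matrix.mul_apply]
        refine Finset.sum_congr rfl fun l _ => ?_
        rw [Matrix.mul_diagonal]
      have hlim : Tendsto
          (fun i : ℕ => ∑ k, (∑ l, (T * U) j l * μ l ^ i * (star U * T⁻¹) l k) * e k)
          atTop (nhds 0) := by
        have h0 : (nhds (0:ℝ)) = nhds (∑ k : Fin d, (∑ _l : Fin d, (0:ℝ)) * e k) := by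
          simp
        rw [h0]
        refine tendsto_finset_sum _ fun k _ => Tendsto.mul ?_ tendsto_const_nhds
        refine tendsto_finset_sum _ fun l _ => ?_
        have hpow : Tendsto (fun i : ℕ => μ l ^ i) atTop (nhds 0) :=
          tendsto_pow_atTop_nhds_zero_iff.mpr
            (abs_lt.mpr ⟨by linarith [hμpos l], hμlt1 l⟩)
        simpa using (tendsto_const_nhds.mul hpow).mul
          (tendsto_const_nhds (x := (star U * T⁻¹) l k))
      have : (0 : Fin d → ℝ) j = 0 := rfl
      rw [this]
      exact hlim.congr fun i => (hentry i).symm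
    have hfinal := hconv.add (tendsto_const_nhds (x := ustar))
    rw [zero_add] at hfinal
    exact Tendsto.congr (fun i => (hu_closed i).symm) hfinal
end

section
/- Let m : [0,∞) → ℝ^d and C : [0,∞) → ℝ^{d×d} solve the ODE system dm/dt = C(t) H^T R^{-1} (y - H m(t)), dC/dt = -C(t) H^T R^{-1} H C(t), with C(0) symmetric positive definite. Then for all t ≥ 0, C(t) = (C(0)^{-1} + t H^T R^{-1} H)^{-1} and m(t) = (C(0)^{-1} + t H^T R^{-1} H)^{-1} (C(0)^{-1} m(0) + t H^T R^{-1} y). -/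
open Matrix Set

theorem stmt_8 {k d : ℕ} (H : Matrix (Fin k) (Fin d) ℝ) (R : Matrix (Fin k) (Fin k) ℝ)
    (hR : R.PosDef) (y : Fin k → ℝ)
    (m : ℝ → Fin d → ℝ) (C : ℝ → Matrix (Fin d) (Fin d) ℝ)
    (hC0 : (C 0).PosDef)
    (hm : ∀ t ∈ Set.Ici (0 : ℝ), ∀ i,
      HasDerivWithinAt (fun s => m s i)
        ((C t *ᵥ (Hᵀ *ᵥ (R⁻¹ *ᵥ (y - H *ᵥ m t)))) i) (Set.Ici 0) t)
    (hCd : ∀ t ∈ Set.Ici (0 : ℝ), ∀ i j,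
      HasDerivWithinAt (fun s => C s i j)
        ((-(C t * (Hᵀ * R⁻¹ * H) * C t)) i j) (Set.Ici 0) t) :
    ∀ t ∈ Set.Ici (0 : ℝ),
      C t = ((C 0)⁻¹ + t • (Hᵀ * R⁻¹ * H))⁻¹ ∧
      m t = ((C 0)⁻¹ + t • (Hᵀ * R⁻¹ * H))⁻¹ *ᵥ
        ((C 0)⁻¹ *ᵥ m 0 + t • (Hᵀ *ᵥ (R⁻¹ *ᵥ y))) := by
  set A := Hᵀ * R⁻¹ * H with hA
  -- A is positive semidefinite
  have hApsd : A.PosSemidef := by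
    have h1 : (R⁻¹).PosSemidef := hR.inv.posSemidef
    simpa [Matrix.conjTranspose_eq_transpose_of_trivial, hA] using
      h1.conjTranspose_mul_mul_same H
  -- t • A is positive semidefinite for t ≥ 0
  have hsmul : ∀ t : ℝ, 0 ≤ t → (t • A).PosSemidef := by
    intro t ht
    constructor
    · unfold Matrix.IsHermitian
      have h : Aᵀ = A := by simpa using hApsd.1.eq
      simp [conjTranspose_smul, h]
    · intro x
      have e : (x.sum fun i xi => x.sum fun j xj => star xi * (t • A) i j * xj) =
          t * (x.sum fun i xi => x.sum fun j xj => star xi * A i j * xj) := by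
        simp only [Finsupp.sum, Finset.mul_sum, Matrix.smul_apply, smul_eq_mul]
        refine Finset.sum_congr rfl fun _ _ => Finset.sum_congr rfl fun _ _ => ?_
        ring
      rw [e]
      exact mul_nonneg ht (hApsd.2 x)
  -- B t := (C 0)⁻¹ + t • A is positive definite for t ≥ 0
  have hBpd : ∀ t : ℝ, 0 ≤ t → ((C 0)⁻¹ + t • A).PosDef := fun t ht =>
    hC0.inv.add_posSemidef (hsmul t ht)
  have hBdet : ∀ t : ℝ, 0 ≤ t → IsUnit ((C 0)⁻¹ + t • A).det := fun t ht =>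
    (hBpd t ht).det_pos.ne'.isUnit
  -- entrywise derivative of B
  have hBd : ∀ (t : ℝ) (i l : Fin d),
      HasDerivWithinAt (fun s : ℝ => ((C 0)⁻¹ + s • A) i l) (A i l) (Ici 0) t := by
    intro t i l
    have h : HasDerivWithinAt (fun s : ℝ => (C 0)⁻¹ i l + s * A i l) (A i l) (Ici 0) t := by
      simpa using (((hasDerivWithinAt_id t (Ici 0)).mul_const (A i l)).const_add ((C 0)⁻¹ i l))
    simpa [Matrix.add_apply, Matrix.smul_apply, smul_eq_mul] using h
  -- entrywise derivative of B * C
  have hBCd : ∀ t ∈ Ici (0 : ℝ), ∀ i j,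
      HasDerivWithinAt (fun s : ℝ => ((((C 0)⁻¹ + s • A) * C s : Matrix (Fin d) (Fin d) ℝ)) i j)
        ((A * C t + ((C 0)⁻¹ + t • A) * (-(C t * A * C t)) : Matrix (Fin d) (Fin d) ℝ) i j)
        (Ici 0) t := by
    intro t ht i j
    have h : HasDerivWithinAt
        (fun s : ℝ => ∑ l, ((C 0)⁻¹ + s • A) i l * C s l j)
        (∑ l, (A i l * C t l j + ((C 0)⁻¹ + t • A) i l * ((-(C t * A * C t)) l j)))
        (Ici 0) t :=
      HasDerivWithinAt.fun_sum fun l _ => (hBd t i l).mul (hCd t ht l j)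
    simpa [Matrix.mul_apply, Matrix.add_apply, Finset.sum_add_distrib] using h
  -- the defect G
  set G : ℝ → Fin d → Fin d → ℝ :=
    fun s i j => ((1 : Matrix (Fin d) (Fin d) ℝ) - ((C 0)⁻¹ + s • A) * C s) i j with hG
  have hGd : ∀ t ∈ Ici (0 : ℝ),
      HasDerivWithinAt G
        (fun i j => ((((C 0)⁻¹ + t • A) * C t - 1) * (A * C t) : Matrix (Fin d) (Fin d) ℝ) i j)
        (Ici 0) t := by
    intro t ht
    refine hasDerivWithinAt_pi.2 fun i => hasDerivWithinAt_pi.2 fun j => ?_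
    have heq : ((((C 0)⁻¹ + t • A) * C t - 1) * (A * C t) : Matrix (Fin d) (Fin d) ℝ) =
        -(A * C t + ((C 0)⁻¹ + t • A) * (-(C t * A * C t))) := by
      noncomm_ring
    have hval : ((((C 0)⁻¹ + t • A) * C t - 1) * (A * C t) : Matrix (Fin d) (Fin d) ℝ) i j =
        -((A * C t + ((C 0)⁻¹ + t • A) * (-(C t * A * C t)) : Matrix (Fin d) (Fin d) ℝ) i j) := by
      rw [heq]; simp
    simp only [hG]
    rw [hval]
    exact ((hBCd t ht i j).const_sub ((1 : Matrix (Fin d) (Fin d) ℝ) i j)).congr_deriv (by ring)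
  -- key: B t * C t = 1 for t ≥ 0
  have hBC1 : ∀ t ∈ Ici (0 : ℝ), ((C 0)⁻¹ + t • A) * C t = 1 := by
    intro t ht
    rw [mem_Ici] at ht
    have hG0 : G 0 = 0 := by
      funext i j
      simp [hG, Matrix.nonsing_inv_mul (C 0) hC0.det_pos.ne'.isUnit]
    have hGc : ContinuousOn G (Icc 0 t) := fun x hx =>
      ((hGd x (mem_Ici.2 hx.1)).continuousWithinAt).mono Icc_subset_Ici_self
    have hCc : ∀ (l j : Fin d), ContinuousOn (fun x => C x l j) (Icc 0 t) := fun l j x hx =>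
      ((hCd x (mem_Ici.2 hx.1) l j).continuousWithinAt).mono Icc_subset_Ici_self
    have hφc : ContinuousOn (fun x => fun l j => (A * C x : Matrix (Fin d) (Fin d) ℝ) l j)
        (Icc 0 t) := by
      refine continuousOn_pi.2 fun l => continuousOn_pi.2 fun j => ?_
      simp only [Matrix.mul_apply]
      exact continuousOn_finset_sum _ fun r _ => continuousOn_const.mul (hCc r j)
    obtain ⟨M, hM⟩ := isCompact_Icc.exists_bound_of_continuousOn hφc
    set K : ℝ := d * max M 0 with hK
    have hKnn : 0 ≤ K := by positivity
    have hbound : ∀ x ∈ Ico (0 : ℝ) t,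
        ‖(fun i j => ((((C 0)⁻¹ + x • A) * C x - 1) * (A * C x) :
            Matrix (Fin d) (Fin d) ℝ) i j : Fin d → Fin d → ℝ)‖ ≤ K * ‖G x‖ + 0 := by
      intro x hx
      rw [add_zero]
      have hKG : 0 ≤ K * ‖G x‖ := mul_nonneg hKnn (norm_nonneg _)
      refine (pi_norm_le_iff_of_nonneg hKG).2 fun i => ?_
      refine (pi_norm_le_iff_of_nonneg hKG).2 fun j => ?_
      have hxIcc : x ∈ Icc (0 : ℝ) t := ⟨hx.1, hx.2.le⟩
      rw [Matrix.mul_apply]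
      calc ‖∑ l, ((((C 0)⁻¹ + x • A) * C x - 1) : Matrix (Fin d) (Fin d) ℝ) i l *
              (A * C x : Matrix (Fin d) (Fin d) ℝ) l j‖
          ≤ ∑ l, ‖((((C 0)⁻¹ + x • A) * C x - 1) : Matrix (Fin d) (Fin d) ℝ) i l *
              (A * C x : Matrix (Fin d) (Fin d) ℝ) l j‖ := norm_sum_le _ _
        _ ≤ ∑ _l : Fin d, ‖G x‖ * max M 0 := by
            refine Finset.sum_le_sum fun l _ => ?_
            rw [norm_mul]
            refine mul_le_mul ?_ ?_ (norm_nonneg _) (norm_nonneg _)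
            · have h1 : ((((C 0)⁻¹ + x • A) * C x - 1) : Matrix (Fin d) (Fin d) ℝ) i l
                  = -(G x i l) := by
                simp [hG, Matrix.sub_apply, Matrix.one_apply]
              rw [h1, norm_neg]
              exact (norm_le_pi_norm (G x i) l).trans (norm_le_pi_norm (G x) i)
            · have h2 : ‖(A * C x : Matrix (Fin d) (Fin d) ℝ) l j‖ ≤ M := by
                refine le_trans ?_ (hM x hxIcc)
                exact (norm_le_pi_norm _ j).trans (norm_le_pi_norm _ l)
              exact h2.trans (le_max_left _ _)
        _ = K * ‖G x‖ := by
            rw [Finset.sum_const, Finset.card_univ, Fintype.card_fin, nsmul_eq_mul]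
            ring
    have hf' : ∀ x ∈ Ico (0 : ℝ) t, HasDerivWithinAt G
        (fun i j => ((((C 0)⁻¹ + x • A) * C x - 1) * (A * C x) :
            Matrix (Fin d) (Fin d) ℝ) i j) (Ici x) x := fun x hx =>
      (hGd x (mem_Ici.2 hx.1)).mono (Ici_subset_Ici.2 hx.1)
    have hGt := norm_le_gronwallBound_of_norm_deriv_right_le (δ := 0) (ε := 0) hGc hf'
      (by rw [hG0, norm_zero]) hbound t ⟨ht, le_refl t⟩
    rw [gronwallBound_ε0_δ0] at hGt
    have hGt0 : G t = 0 := by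
      have := norm_le_zero_iff.1 hGt
      exact this
    have : (1 : Matrix (Fin d) (Fin d) ℝ) - ((C 0)⁻¹ + t • A) * C t = 0 := by
      ext i j
      exact congrFun (congrFun hGt0 i) j
    have := sub_eq_zero.1 this
    exact this.symm
  -- conclusion
  intro t ht
  have htr := mem_Ici.1 ht
  have hCinv : C t = ((C 0)⁻¹ + t • A)⁻¹ := (Matrix.inv_eq_right_inv (hBC1 t ht)).symm
  refine ⟨hCinv, ?_⟩
  -- the mean part
  set v : Fin d → ℝ := Hᵀ *ᵥ (R⁻¹ *ᵥ y) with hv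
  set c : Fin d → ℝ := (C 0)⁻¹ *ᵥ m 0 with hc
  set n : ℝ → Fin d → ℝ :=
    fun s => ((C 0)⁻¹ + s • A) *ᵥ m s - (c + s • v) with hn
  have hnd : ∀ x ∈ Ici (0 : ℝ), HasDerivWithinAt n (fun _ => (0 : ℝ)) (Ici 0) x := by
    intro x hx
    refine hasDerivWithinAt_pi.2 fun i => ?_
    have h1 : HasDerivWithinAt (fun s : ℝ => ∑ l, ((C 0)⁻¹ + s • A) i l * m s l)
        (∑ l, (A i l * m x l +
          ((C 0)⁻¹ + x • A) i l * ((C x *ᵥ (Hᵀ *ᵥ (R⁻¹ *ᵥ (y - H *ᵥ m x)))) l)))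
        (Ici 0) x :=
      HasDerivWithinAt.fun_sum fun l _ => (hBd x i l).mul (hm x hx l)
    have h2 : HasDerivWithinAt (fun s : ℝ => c i + s * v i) (v i) (Ici 0) x := by
      simpa using ((hasDerivWithinAt_id x (Ici 0)).mul_const (v i)).const_add (c i)
    have h3 := h1.sub h2
    have hz : ((C 0)⁻¹ + x • A) *ᵥ (C x *ᵥ (Hᵀ *ᵥ (R⁻¹ *ᵥ (y - H *ᵥ m x))))
        = v - A *ᵥ m x := by
      rw [Matrix.mulVec_mulVec, hBC1 x hx, Matrix.one_mulVec]
      rw [Matrix.mulVec_sub, Matrix.mulVec_sub]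
      rw [hv, hA]
      rw [← Matrix.mulVec_mulVec, ← Matrix.mulVec_mulVec]
    have hval : (∑ l, (A i l * m x l +
          ((C 0)⁻¹ + x • A) i l * ((C x *ᵥ (Hᵀ *ᵥ (R⁻¹ *ᵥ (y - H *ᵥ m x)))) l))) - v i
        = 0 := by
      have hsum : (∑ l, (A i l * m x l +
          ((C 0)⁻¹ + x • A) i l * ((C x *ᵥ (Hᵀ *ᵥ (R⁻¹ *ᵥ (y - H *ᵥ m x)))) l)))
          = (A *ᵥ m x) i +
            (((C 0)⁻¹ + x • A) *ᵥ (C x *ᵥ (Hᵀ *ᵥ (R⁻¹ *ᵥ (y - H *ᵥ m x))))) i := by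
        rw [Finset.sum_add_distrib]
        rfl
      rw [hsum, hz]
      simp [Pi.sub_apply]
    have h4 : HasDerivWithinAt (fun s : ℝ => n s i) (0 : ℝ) (Ici 0) x := by
      have hfun : (fun s : ℝ => n s i) =
          (fun s : ℝ => (∑ l, ((C 0)⁻¹ + s • A) i l * m s l) - (c i + s * v i)) := by
        funext s
        simp [hn, Matrix.mulVec, dotProduct, Pi.sub_apply, Pi.add_apply, Pi.smul_apply,
          smul_eq_mul]
      rw [hfun]
      have := h3.congr_deriv hval
      exact this
    exact h4
  have hn0 : n 0 = 0 := by
    funext i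
    simp [hn, hc]
  have hnt : n t = 0 := by
    have hb := Convex.norm_image_sub_le_of_norm_hasDerivWithin_le
      (f' := fun _ => (fun _ => (0 : ℝ) : Fin d → ℝ)) (C := 0)
      (fun x hx => hnd x hx)
      (fun x _ => le_of_eq (by rw [show (fun _ => (0:ℝ) : Fin d → ℝ) = 0 from rfl, norm_zero]))
      (convex_Ici 0) (self_mem_Ici) ht
    rw [hn0, sub_zero] at hb
    simp only [zero_mul] at hb
    exact norm_le_zero_iff.1 hb
  have hBm : ((C 0)⁻¹ + t • A) *ᵥ m t = c + t • v := by
    have h5 : ((C 0)⁻¹ + t • A) *ᵥ m t - (c + t • v) = 0 := by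
      have := hnt
      rw [hn] at this
      exact this
    exact sub_eq_zero.1 h5
  calc m t = (1 : Matrix (Fin d) (Fin d) ℝ) *ᵥ m t := (Matrix.one_mulVec _).symm
    _ = (((C 0)⁻¹ + t • A)⁻¹ * ((C 0)⁻¹ + t • A)) *ᵥ m t := by
        rw [Matrix.nonsing_inv_mul _ (hBdet t htr)]
    _ = ((C 0)⁻¹ + t • A)⁻¹ *ᵥ (((C 0)⁻¹ + t • A) *ᵥ m t) := by
        rw [← Matrix.mulVec_mulVec]
    _ = ((C 0)⁻¹ + t • A)⁻¹ *ᵥ (c + t • v) := by rw [hBm]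
end

section
/- Let H ∈ ℝ^{k×d} have full column rank, R symmetric positive definite, C(0) symmetric positive definite, and m(t) = (C(0)^{-1} + t H^T R^{-1} H)^{-1} (C(0)^{-1} m(0) + t H^T R^{-1} y). Then m(t) → (H^T R^{-1} H)^{-1} H^T R^{-1} y as t → ∞. -/
open Matrix Filter

theorem stmt_10 {k d : ℕ} (H : Matrix (Fin k) (Fin d) ℝ) (R : Matrix (Fin k) (Fin k) ℝ)
    (hR : R.PosDef) (C0 : Matrix (Fin d) (Fin d) ℝ) (hC0 : C0.PosDef)
    (hrank : H.rank = d) (y : Fin k → ℝ) (m0 : Fin d → ℝ)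
    (m : ℝ → Fin d → ℝ)
    (hm : ∀ t, m t = (C0⁻¹ + t • (Hᵀ * R⁻¹ * H))⁻¹ *ᵥ
      (C0⁻¹ *ᵥ m0 + t • (Hᵀ *ᵥ (R⁻¹ *ᵥ y)))) :
    Tendsto m atTop (nhds ((Hᵀ * R⁻¹ * H)⁻¹ *ᵥ (Hᵀ *ᵥ (R⁻¹ *ᵥ y)))) := by
  set A := Hᵀ * R⁻¹ * H with hA
  set w := Hᵀ *ᵥ (R⁻¹ *ᵥ y) with hw
  set u := C0⁻¹ *ᵥ m0 with hu
  have hRinv : (R⁻¹).PosDef := hR.inv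
  -- H has trivial kernel
  have hinj : Function.Injective H.mulVecLin := by
    rw [← LinearMap.ker_eq_bot]
    have hrn := H.mulVecLin.finrank_range_add_finrank_ker
    rw [show (Module.finrank ℝ (LinearMap.range H.mulVecLin)) = d from hrank,
      Module.finrank_pi, Fintype.card_fin] at hrn
    have : Module.finrank ℝ (LinearMap.ker H.mulVecLin) = 0 := by omega
    exact Submodule.finrank_eq_zero.mp this
  -- A is positive definite
  have hApos : A.PosDef := by
    rw [posDef_iff_dotProduct_mulVec]
    constructor
    · have := isHermitian_conjTranspose_mul_mul H hRinv.isHermitian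
      simpa [hA, conjTranspose_eq_transpose_of_trivial] using this
    · intro x hx
      have hHx : H *ᵥ x ≠ 0 := by
        intro h
        exact hx (hinj (by simpa [Matrix.mulVecLin_apply] using h))
      have h0 := hRinv.dotProduct_mulVec_pos hHx
      rw [hA, show (Hᵀ * R⁻¹ * H) *ᵥ x = Hᵀ *ᵥ (R⁻¹ *ᵥ (H *ᵥ x)) by
        rw [← Matrix.mulVec_mulVec, ← Matrix.mulVec_mulVec]]
      simp only [star_trivial] at h0 ⊢
      rwa [Matrix.dotProduct_mulVec, Matrix.vecMul_transpose]
  have hAdet : IsUnit A.det := isUnit_iff_ne_zero.mpr hApos.det_pos.ne'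
  -- positive definiteness of s • C0⁻¹ + A for s ≥ 0
  have hC0inv : (C0⁻¹).PosDef := hC0.inv
  have hMpos : ∀ s : ℝ, 0 ≤ s → (s • C0⁻¹ + A).PosDef := by
    intro s hs
    rw [posDef_iff_dotProduct_mulVec]
    constructor
    · have h1 : (s • C0⁻¹).IsHermitian := by
        unfold Matrix.IsHermitian
        rw [conjTranspose_smul, hC0inv.isHermitian]
        simp
      exact h1.add hApos.isHermitian
    · intro x hx
      have h1 : 0 ≤ star x ⬝ᵥ ((s • C0⁻¹) *ᵥ x) := by
        rw [Matrix.smul_mulVec, dotProduct_smul]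
        exact smul_nonneg hs (hC0inv.posSemidef.dotProduct_mulVec_nonneg x)
      have h2 := hApos.dotProduct_mulVec_pos hx
      rw [Matrix.add_mulVec, dotProduct_add]
      linarith
  -- the auxiliary function
  set f : ℝ → Fin d → ℝ := fun s => (s • C0⁻¹ + A)⁻¹ *ᵥ (s • u + w) with hf
  have hfc : Tendsto f (nhds 0) (nhds (A⁻¹ *ᵥ w)) := by
    have hM : Continuous fun s : ℝ => s • C0⁻¹ + A :=
      (continuous_id.smul continuous_const).add continuous_const
    have hdet : Tendsto (fun s : ℝ => (s • C0⁻¹ + A).det) (nhds 0) (nhds A.det) := by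
      have := (hM.matrix_det).tendsto 0
      simpa using this
    have hdetinv : Tendsto (fun s : ℝ => (s • C0⁻¹ + A).det⁻¹) (nhds 0) (nhds A.det⁻¹) :=
      hdet.inv₀ hApos.det_pos.ne'
    have hadj : Tendsto (fun s : ℝ => (s • C0⁻¹ + A).adjugate *ᵥ (s • u + w)) (nhds 0)
        (nhds (A.adjugate *ᵥ w)) := by
      have hb : Continuous fun s : ℝ => s • u + w :=
        (continuous_id.smul continuous_const).add continuous_const
      have := ((hM.matrix_adjugate).matrix_mulVec hb).tendsto 0
      simpa using this
    have key : Tendsto (fun s : ℝ => (s • C0⁻¹ + A).det⁻¹ •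
        ((s • C0⁻¹ + A).adjugate *ᵥ (s • u + w))) (nhds 0)
        (nhds (A.det⁻¹ • (A.adjugate *ᵥ w))) := hdetinv.smul hadj
    have heq : ∀ s : ℝ, f s = (s • C0⁻¹ + A).det⁻¹ •
        ((s • C0⁻¹ + A).adjugate *ᵥ (s • u + w)) := by
      intro s
      rw [hf]
      simp only [Matrix.inv_def, Ring.inverse_eq_inv', Matrix.smul_mulVec]
    have heq0 : A⁻¹ *ᵥ w = A.det⁻¹ • (A.adjugate *ᵥ w) := by
      rw [Matrix.inv_def, Ring.inverse_eq_inv', Matrix.smul_mulVec]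
    rw [heq0]
    exact key.congr (fun s => (heq s).symm)
  -- m t = f t⁻¹ for t ≥ 1
  have hcomp : ∀ᶠ t in atTop, (f ∘ fun t : ℝ => t⁻¹) t = m t := by
    filter_upwards [eventually_ge_atTop (1 : ℝ)] with t ht
    have ht0 : (0:ℝ) < t := lt_of_lt_of_le one_pos ht
    have htne : t ≠ 0 := ne_of_gt ht0
    have hX : (t⁻¹ • C0⁻¹ + A).PosDef := hMpos t⁻¹ (by positivity)
    set X := t⁻¹ • C0⁻¹ + A with hXdef
    have hMeq : C0⁻¹ + t • A = t • X := by
      rw [hXdef, smul_add, smul_smul, mul_inv_cancel₀ htne, one_smul]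
    have hbeq : u + t • w = t • (t⁻¹ • u + w) := by
      rw [smul_add, smul_smul, mul_inv_cancel₀ htne, one_smul]
    have hXinv : (t • X)⁻¹ = t⁻¹ • X⁻¹ := by
      apply Matrix.inv_eq_left_inv
      rw [Matrix.smul_mul, Matrix.mul_smul, smul_smul, inv_mul_cancel₀ htne, one_smul,
        Matrix.nonsing_inv_mul X (isUnit_iff_ne_zero.mpr hX.det_pos.ne')]
    rw [hm t, Function.comp_apply, hf, hMeq, hbeq, hXinv]
    simp only [Matrix.smul_mulVec, Matrix.mulVec_smul, smul_smul,
      inv_mul_cancel₀ htne, mul_inv_cancel₀ htne, one_smul]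
    rfl
  have : Tendsto (f ∘ fun t : ℝ => t⁻¹) atTop (nhds (A⁻¹ *ᵥ w)) :=
    hfc.comp tendsto_inv_atTop_zero
  exact this.congr' hcomp
end

section
/- Let m̃ : [0,∞) → ℝ^k and C̃ : [0,∞) → ℝ^{k×k} solve dm̃/dt = C̃(t)(b - m̃(t)) and dC̃/dt = -C̃(t)², with C̃(0) symmetric positive definite. Then m̃(t) = (C̃(0)^{-1} + tI)^{-1} (C̃(0)^{-1} m̃(0) + t b), and m̃(t) → b as t → ∞. -/
open Matrix Filter Set

lemma smul_one_posSemidef {k : ℕ} {t : ℝ} (ht : 0 ≤ t) :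
    (t • (1 : Matrix (Fin k) (Fin k) ℝ)).PosSemidef := by
  rw [Matrix.posSemidef_iff_dotProduct_mulVec]
  constructor
  · simp [Matrix.IsHermitian, Matrix.conjTranspose_smul, Matrix.conjTranspose_one]
  · intro x
    simp only [Matrix.smul_mulVec, Matrix.one_mulVec, dotProduct_smul, smul_eq_mul,
      star_trivial]
    exact mul_nonneg ht (Finset.sum_nonneg fun i _ => mul_self_nonneg _)

lemma entry_deriv {k : ℕ}
    (C : ℝ → Matrix (Fin k) (Fin k) ℝ)
    (hCd : ∀ t ∈ Set.Ici (0 : ℝ), ∀ i j,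
      HasDerivWithinAt (fun s => C s i j) ((-(C t * C t)) i j) (Set.Ici 0) t)
    (t : ℝ) (ht : t ∈ Set.Ici (0:ℝ)) (i j : Fin k) :
    HasDerivWithinAt (fun s => (((C 0)⁻¹ + s • (1 : Matrix (Fin k) (Fin k) ℝ)) * C s) i j)
      ((C t + ((C 0)⁻¹ + t • (1 : Matrix (Fin k) (Fin k) ℝ)) * -(C t * C t)) i j)
      (Set.Ici 0) t := by
  have h : ∀ l : Fin k, HasDerivWithinAt
      (fun s => ((C 0)⁻¹ + s • (1 : Matrix (Fin k) (Fin k) ℝ)) i l * C s l j)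
      ((0 + 1 * (1 : Matrix (Fin k) (Fin k) ℝ) i l) * C t l j
        + ((C 0)⁻¹ + t • (1 : Matrix (Fin k) (Fin k) ℝ)) i l * (-(C t * C t)) l j)
      (Set.Ici 0) t := by
    intro l
    refine HasDerivWithinAt.mul ?_ (hCd t ht l j)
    simp only [Matrix.add_apply, Matrix.smul_apply, smul_eq_mul]
    exact (hasDerivWithinAt_const t _ _).add ((hasDerivWithinAt_id t _).mul_const _)
  have hsum := HasDerivWithinAt.fun_sum (fun l (_ : l ∈ Finset.univ) => h l)
  convert hsum using 1
  · rfl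
  · rfl
  · funext s; exact Matrix.mul_apply
  simp [Matrix.mul_apply, Matrix.add_apply, Finset.sum_add_distrib, Matrix.one_apply, ite_mul]

lemma pi2_entry_le {k : ℕ} (x : Fin k → Fin k → ℝ) (i j : Fin k) : |x i j| ≤ ‖x‖ :=
  le_trans (norm_le_pi_norm (x i) j) (norm_le_pi_norm x i)

lemma AC_one {k : ℕ}
    (C : ℝ → Matrix (Fin k) (Fin k) ℝ) (hC0 : (C 0).PosDef)
    (hCd : ∀ t ∈ Set.Ici (0 : ℝ), ∀ i j,
      HasDerivWithinAt (fun s => C s i j) ((-(C t * C t)) i j) (Set.Ici 0) t) :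
    ∀ t ∈ Set.Ici (0:ℝ), ((C 0)⁻¹ + t • (1 : Matrix (Fin k) (Fin k) ℝ)) * C t = 1 := by
  set A : ℝ → Matrix (Fin k) (Fin k) ℝ := fun s => (C 0)⁻¹ + s • 1 with hA
  set E : ℝ → Fin k → Fin k → ℝ := fun s i j => ((1 : Matrix (Fin k) (Fin k) ℝ) - A s * C s) i j
    with hE
  have hdet0 : IsUnit (C 0).det := isUnit_iff_ne_zero.mpr hC0.det_pos.ne'
  have hE0 : E 0 = 0 := by
    funext i j
    simp [hE, hA, Matrix.nonsing_inv_mul (C 0) hdet0]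
  have hEd : ∀ s ∈ Set.Ici (0:ℝ), HasDerivWithinAt E
      (fun i j => ((A s * C s - 1) * C s) i j) (Set.Ici 0) s := by
    intro s hs
    rw [hasDerivWithinAt_pi]
    intro i
    rw [hasDerivWithinAt_pi]
    intro j
    have h1 := entry_deriv C hCd s hs i j
    have h2 := h1.const_sub ((1 : Matrix (Fin k) (Fin k) ℝ) i j)
    have h3 : (A s * C s - 1) * C s = -(C s + A s * -(C s * C s)) := by
      noncomm_ring
    rw [h3, Matrix.neg_apply]
    exact h2
  have hEc : ContinuousOn E (Set.Ici 0) := by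
    intro s hs
    rw [continuousWithinAt_pi]; intro i
    rw [continuousWithinAt_pi]; intro j
    exact ((hasDerivWithinAt_pi.mp (hasDerivWithinAt_pi.mp (hEd s hs) i) j)).continuousWithinAt
  intro T hT
  have hT0 : (0:ℝ) ≤ T := hT
  -- bound on C entries on [0,T]
  have hCc : ContinuousOn (fun s => (fun i j => C s i j : Fin k → Fin k → ℝ)) (Set.Icc 0 T) := by
    intro s hs
    rw [continuousWithinAt_pi]; intro i
    rw [continuousWithinAt_pi]; intro j
    exact ((hCd s hs.1 i j).continuousWithinAt).mono Set.Icc_subset_Ici_self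
  obtain ⟨M, hM⟩ := isCompact_Icc.exists_bound_of_continuousOn hCc
  set M' := max M 0 with hM'
  have hM'0 : (0:ℝ) ≤ M' := le_max_right _ _
  set K : ℝ := k * M' with hK
  have hK0 : (0:ℝ) ≤ K := mul_nonneg (Nat.cast_nonneg k) hM'0
  have hCb : ∀ s ∈ Set.Icc (0:ℝ) T, ∀ l j, |C s l j| ≤ M' := by
    intro s hs l j
    refine le_trans (le_trans (pi2_entry_le (fun i j => C s i j) l j) (hM s hs)) (le_max_left _ _)
  have hEb : ∀ s ∈ Set.Icc (0:ℝ) T, ∀ i l, |(A s * C s - 1) i l| ≤ ‖E s‖ := by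
    intro s hs i l
    have : (A s * C s - 1) i l = -(E s i l) := by
      simp [hE, Matrix.sub_apply]
    rw [this, abs_neg]
    exact pi2_entry_le (E s) i l
  have bound : ∀ x ∈ Set.Ico (0:ℝ) T, ‖(fun i j => ((A x * C x - 1) * C x) i j : Fin k → Fin k → ℝ)‖
      ≤ K * ‖E x‖ + 0 := by
    intro x hx
    rw [add_zero]
    have hnn : 0 ≤ K * ‖E x‖ := mul_nonneg hK0 (norm_nonneg _)
    rw [pi_norm_le_iff_of_nonneg hnn]
    intro i
    rw [pi_norm_le_iff_of_nonneg hnn]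
    intro j
    have hx' : x ∈ Set.Icc (0:ℝ) T := ⟨hx.1, hx.2.le⟩
    calc ‖((A x * C x - 1) * C x) i j‖
        = |∑ l, (A x * C x - 1) i l * C x l j| := by rw [Matrix.mul_apply]; rfl
      _ ≤ ∑ l, |(A x * C x - 1) i l * C x l j| := Finset.abs_sum_le_sum_abs _ _
      _ ≤ ∑ l : Fin k, ‖E x‖ * M' := by
          refine Finset.sum_le_sum fun l _ => ?_
          rw [abs_mul]
          exact mul_le_mul (hEb x hx' i l) (hCb x hx' l j) (abs_nonneg _)
            (norm_nonneg _)
      _ = K * ‖E x‖ := by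
          rw [Finset.sum_const, Finset.card_univ, Fintype.card_fin, nsmul_eq_mul, hK]
          ring
  have := norm_le_gronwallBound_of_norm_deriv_right_le
    (hEc.mono Set.Icc_subset_Ici_self)
    (fun x hx => (hEd x hx.1).mono (Set.Ici_subset_Ici.2 hx.1))
    (by rw [hE0]; simp : ‖E 0‖ ≤ (0:ℝ)) bound T (Set.right_mem_Icc.2 hT0)
  rw [gronwallBound_ε0_δ0] at this
  have hET : E T = 0 := norm_le_zero_iff.mp this
  have : (1 : Matrix (Fin k) (Fin k) ℝ) - A T * C T = 0 := by
    ext i j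
    have := congrFun (congrFun hET i) j
    simpa [hE] using this
  have := sub_eq_zero.mp this
  exact this.symm

theorem stmt_12 {k : ℕ} (b : Fin k → ℝ)
    (m : ℝ → Fin k → ℝ) (C : ℝ → Matrix (Fin k) (Fin k) ℝ)
    (hC0 : (C 0).PosDef)
    (hmd : ∀ t ∈ Set.Ici (0 : ℝ), ∀ i,
      HasDerivWithinAt (fun s => m s i) ((C t *ᵥ (b - m t)) i) (Set.Ici 0) t)
    (hCd : ∀ t ∈ Set.Ici (0 : ℝ), ∀ i j,
      HasDerivWithinAt (fun s => C s i j) ((-(C t * C t)) i j) (Set.Ici 0) t) :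
    (∀ t ∈ Set.Ici (0 : ℝ),
      m t = ((C 0)⁻¹ + t • (1 : Matrix (Fin k) (Fin k) ℝ))⁻¹ *ᵥ
        ((C 0)⁻¹ *ᵥ m 0 + t • b)) ∧
    Tendsto m atTop (nhds b) := by
  have hAC := AC_one C hC0 hCd
  set A : ℝ → Matrix (Fin k) (Fin k) ℝ := fun s => (C 0)⁻¹ + s • 1 with hA
  have hApos : ∀ t : ℝ, 0 ≤ t → (A t).PosDef :=
    fun t ht => hC0.inv.add_posSemidef (smul_one_posSemidef ht)
  have hAdet : ∀ t : ℝ, 0 ≤ t → IsUnit (A t).det :=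
    fun t ht => isUnit_iff_ne_zero.mpr (hApos t ht).det_pos.ne'
  set c0 : Fin k → ℝ := (C 0)⁻¹ *ᵥ m 0 with hc0
  set w : ℝ → Fin k → ℝ := fun s => A s *ᵥ m s - (c0 + s • b) with hw
  have hw0 : w 0 = 0 := by
    funext i
    simp [hw, hA, hc0]
  -- derivative of w is 0
  have hwd : ∀ t ∈ Set.Ici (0:ℝ), HasDerivWithinAt w 0 (Set.Ici 0) t := by
    intro t ht
    rw [hasDerivWithinAt_pi]
    intro i
    have hprod : ∀ l : Fin k, HasDerivWithinAt (fun s => A s i l * m s l)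
        ((0 + 1 * (1 : Matrix (Fin k) (Fin k) ℝ) i l) * m t l
          + A t i l * (C t *ᵥ (b - m t)) l) (Set.Ici 0) t := by
      intro l
      refine HasDerivWithinAt.mul ?_ (hmd t ht l)
      simp only [hA, Matrix.add_apply, Matrix.smul_apply, smul_eq_mul]
      exact (hasDerivWithinAt_const t _ _).add ((hasDerivWithinAt_id t _).mul_const _)
    have hsum := HasDerivWithinAt.fun_sum (fun l (_ : l ∈ Finset.univ) => hprod l)
    have hlin : HasDerivWithinAt (fun s : ℝ => c0 i + s * b i) (0 + 1 * b i) (Set.Ici 0) t :=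
      (hasDerivWithinAt_const t _ _).add ((hasDerivWithinAt_id t _).mul_const _)
    have hcomb := hsum.sub hlin
    have hval : (∑ l, ((0 + 1 * (1 : Matrix (Fin k) (Fin k) ℝ) i l) * m t l
        + A t i l * (C t *ᵥ (b - m t)) l)) - (0 + 1 * b i) = 0 := by
      have key : ∑ l, A t i l * (C t *ᵥ (b - m t)) l = ((A t * C t) *ᵥ (b - m t)) i := by
        rw [← Matrix.mulVec_mulVec]
        simp [Matrix.mulVec, dotProduct]
      rw [Finset.sum_add_distrib, key, hAC t ht, Matrix.one_mulVec]
      simp [Matrix.one_apply, ite_mul, Finset.sum_ite_eq]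
    rw [hval] at hcomb
    have : (fun s => w s i) = fun s => (∑ l, A s i l * m s l) - (c0 i + s * b i) := by
      funext s
      simp [hw, Matrix.mulVec, dotProduct, Pi.sub_apply, smul_eq_mul]
    rw [this]
    exact hcomb
  -- w constant
  have hwc : ContinuousOn w (Set.Ici 0) := fun s hs => (hwd s hs).continuousWithinAt
  have hweq : ∀ t ∈ Set.Ici (0:ℝ), w t = 0 := by
    intro t ht
    have := constant_of_has_deriv_right_zero (f := w) (a := 0) (b := t)
      (hwc.mono Set.Icc_subset_Ici_self)
      (fun x hx => (hwd x hx.1).mono (Set.Ici_subset_Ici.2 hx.1))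
      t (Set.right_mem_Icc.2 ht)
    rw [this, hw0]
  have hm : ∀ t ∈ Set.Ici (0:ℝ), A t *ᵥ m t = c0 + t • b := by
    intro t ht
    have := hweq t ht
    rw [hw] at this
    exact sub_eq_zero.mp this
  have formula : ∀ t ∈ Set.Ici (0:ℝ), m t = (A t)⁻¹ *ᵥ (c0 + t • b) := by
    intro t ht
    have h := congrArg (fun v => (A t)⁻¹ *ᵥ v) (hm t ht)
    simpa [Matrix.mulVec_mulVec, Matrix.nonsing_inv_mul _ (hAdet t ht),
      Matrix.one_mulVec] using h
  refine ⟨formula, ?_⟩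
  -- limit
  set u : Fin k → ℝ := (C 0)⁻¹ *ᵥ (m 0 - b) with hu
  have hvu : ∀ t ∈ Set.Ici (0:ℝ), A t *ᵥ (m t - b) = u := by
    intro t ht
    have hAb : A t *ᵥ b = (C 0)⁻¹ *ᵥ b + t • b := by
      simp [hA, Matrix.add_mulVec, Matrix.smul_mulVec, Matrix.one_mulVec]
    rw [Matrix.mulVec_sub, hm t ht, hAb, hu, Matrix.mulVec_sub, hc0]
    abel
  set S : ℝ := ∑ l, |u l| with hS
  have hS0 : 0 ≤ S := Finset.sum_nonneg fun l _ => abs_nonneg _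
  have key : ∀ t : ℝ, 1 ≤ t → ∀ i, |m t i - b i| ≤ S / t := by
    intro t ht1 i
    have ht0 : (0:ℝ) ≤ t := le_trans zero_le_one ht1
    have htpos : (0:ℝ) < t := lt_of_lt_of_le zero_lt_one ht1
    set v : Fin k → ℝ := m t - b with hv
    set d : ℝ := v ⬝ᵥ v with hd
    have hd0 : 0 ≤ d := Finset.sum_nonneg fun l _ => mul_self_nonneg _
    have h1 : t * d ≤ v ⬝ᵥ u := by
      have e1 : v ⬝ᵥ (A t *ᵥ v) = v ⬝ᵥ ((C 0)⁻¹ *ᵥ v) + t * d := by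
        rw [hA]
        simp [Matrix.add_mulVec, Matrix.smul_mulVec, Matrix.one_mulVec,
          dotProduct_add, dotProduct_smul, smul_eq_mul, hd]
      have e2 : 0 ≤ v ⬝ᵥ ((C 0)⁻¹ *ᵥ v) := by
        have := hC0.inv.posSemidef.dotProduct_mulVec_nonneg v
        simpa using this
      have e3 : v ⬝ᵥ (A t *ᵥ v) = v ⬝ᵥ u := by rw [hvu t ht0]
      linarith [e1, e2, e3]
    have habs : ∀ l, |v l| ≤ Real.sqrt d := by
      intro l
      have : (v l)^2 ≤ d := by
        rw [hd, dotProduct]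
        have : (v l)^2 = v l * v l := sq (v l) ▸ by ring
        rw [this]
        exact Finset.single_le_sum (fun l _ => mul_self_nonneg (v l)) (Finset.mem_univ l)
      exact Real.abs_le_sqrt this
    have h2 : v ⬝ᵥ u ≤ Real.sqrt d * S := by
      rw [dotProduct, hS, Finset.mul_sum]
      refine Finset.sum_le_sum fun l _ => ?_
      calc v l * u l ≤ |v l * u l| := le_abs_self _
        _ = |v l| * |u l| := abs_mul _ _
        _ ≤ Real.sqrt d * |u l| := by
            exact mul_le_mul_of_nonneg_right (habs l) (abs_nonneg _)
    set N : ℝ := Real.sqrt d with hN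
    have hN0 : 0 ≤ N := Real.sqrt_nonneg _
    have hNd : N ^ 2 = d := Real.sq_sqrt hd0
    have hvi : |v i| ≤ N := habs i
    have hfin : N ≤ S / t := by
      rcases eq_or_lt_of_le hN0 with h0 | hpos
      · rw [← h0]
        positivity
      · have : t * N ≤ S := by
          have := le_trans h1 h2
          rw [← hNd] at this
          nlinarith
        rw [le_div_iff₀ htpos]
        linarith [this]
    exact le_trans hvi hfin
  rw [tendsto_pi_nhds]
  intro i
  have hzero : Tendsto (fun t => m t i - b i) atTop (nhds 0) := by
    apply squeeze_zero_norm' (a := fun t => S / t)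
    · filter_upwards [eventually_ge_atTop (1:ℝ)] with t ht
      simpa [Real.norm_eq_abs] using key t ht i
    · exact tendsto_const_nhds.div_atTop tendsto_id
  have := hzero.add_const (b i)
  simpa using this
end

section
/- Let P, R be symmetric positive definite, H a matrix, and define C_i = (P^{-1} + H^T R^{-1} H)^{-1}. Then for α > 0, (H^T R^{-1} H + α^{-1} C_i^{-1})^{-1} H^T R^{-1} = α P H^T ((1 + α) H P H^T + R)^{-1}. -/
open Matrix

lemma posDef_smul' {n : ℕ} {A : Matrix (Fin n) (Fin n) ℝ} (hA : A.PosDef) {c : ℝ}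
    (hc : 0 < c) : (c • A).PosDef := by
  refine ⟨?_, fun x hx => ?_⟩
  · unfold Matrix.IsHermitian
    rw [conjTranspose_smul, hA.1.eq]
    simp
  · exact (hA.smul hc).2 hx

lemma posSemidef_smul' {n : ℕ} {A : Matrix (Fin n) (Fin n) ℝ} (hA : A.PosSemidef) {c : ℝ}
    (hc : 0 ≤ c) : (c • A).PosSemidef := by
  refine ⟨?_, fun x => ?_⟩
  · unfold Matrix.IsHermitian
    rw [conjTranspose_smul, hA.1.eq]
    simp
  · exact (hA.smul hc).2 x

theorem stmt_17 {k d : ℕ} (P : Matrix (Fin d) (Fin d) ℝ) (R : Matrix (Fin k) (Fin k) ℝ)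
    (H : Matrix (Fin k) (Fin d) ℝ) (hP : P.PosDef) (hR : R.PosDef)
    (Ci : Matrix (Fin d) (Fin d) ℝ) (hCi : Ci = (P⁻¹ + Hᵀ * R⁻¹ * H)⁻¹)
    (α : ℝ) (hα : 0 < α) :
    (Hᵀ * R⁻¹ * H + α⁻¹ • Ci⁻¹)⁻¹ * (Hᵀ * R⁻¹)
      = α • (P * Hᵀ * ((1 + α) • (H * P * Hᵀ) + R)⁻¹) := by
  have hHt : Hᵀ = Hᴴ := (conjTranspose_eq_transpose_of_trivial H).symm
  -- positive semidefiniteness facts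
  have hRinv : (R⁻¹).PosDef := hR.inv
  have hPinv : (P⁻¹).PosDef := hP.inv
  have hHRH : (Hᵀ * R⁻¹ * H).PosSemidef := by
    rw [hHt]; exact hRinv.posSemidef.conjTranspose_mul_mul_same H
  have hX : (P⁻¹ + Hᵀ * R⁻¹ * H).PosDef := hPinv.add_posSemidef hHRH
  have hCiinv : Ci⁻¹ = P⁻¹ + Hᵀ * R⁻¹ * H := by
    rw [hCi, Matrix.nonsing_inv_nonsing_inv _ (isUnit_iff_ne_zero.mpr (ne_of_gt hX.det_pos))]
  have hM : (Hᵀ * R⁻¹ * H + α⁻¹ • Ci⁻¹).PosDef := by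
    rw [hCiinv]
    exact Matrix.PosDef.posSemidef_add hHRH (posDef_smul' hX (by positivity))
  have hHPH : (H * P * Hᵀ).PosSemidef := by
    rw [hHt]; exact hP.posSemidef.mul_mul_conjTranspose_same H
  have hS : ((1 + α) • (H * P * Hᵀ) + R).PosDef :=
    Matrix.PosDef.posSemidef_add (posSemidef_smul' hHPH (by positivity)) hR
  set M := Hᵀ * R⁻¹ * H + α⁻¹ • Ci⁻¹ with hMdef
  set S := (1 + α) • (H * P * Hᵀ) + R with hSdef
  -- key algebraic identity
  have hPP : P⁻¹ * P = 1 := Matrix.nonsing_inv_mul P (isUnit_iff_ne_zero.mpr (ne_of_gt hP.det_pos))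
  have hRR : R⁻¹ * R = 1 := Matrix.nonsing_inv_mul R (isUnit_iff_ne_zero.mpr (ne_of_gt hR.det_pos))
  have key : α • (M * (P * Hᵀ)) = Hᵀ * R⁻¹ * S := by
    rw [hMdef, hSdef, hCiinv]
    have e1 : (Hᵀ * R⁻¹ * H + α⁻¹ • (P⁻¹ + Hᵀ * R⁻¹ * H)) * (P * Hᵀ)
        = Hᵀ * R⁻¹ * H * (P * Hᵀ) + α⁻¹ • (P⁻¹ * (P * Hᵀ))
          + α⁻¹ • (Hᵀ * R⁻¹ * H * (P * Hᵀ)) := by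
      simp only [Matrix.add_mul, Matrix.smul_mul, smul_add]
      abel
    rw [e1]
    have e2 : P⁻¹ * (P * Hᵀ) = Hᵀ := by rw [← Matrix.mul_assoc, hPP, Matrix.one_mul]
    rw [e2]
    have e3 : Hᵀ * R⁻¹ * ((1 + α) • (H * P * Hᵀ) + R)
        = (1 + α) • (Hᵀ * R⁻¹ * H * (P * Hᵀ)) + Hᵀ := by
      rw [Matrix.mul_add, Matrix.mul_smul]
      congr 1
      · congr 1; simp [Matrix.mul_assoc]
      · rw [Matrix.mul_assoc, hRR, Matrix.mul_one]
    rw [e3, smul_add, smul_add, smul_smul, smul_smul,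
      mul_inv_cancel₀ (ne_of_gt hα), one_smul]
    module
  -- conclude
  have hMinv : M⁻¹ * M = 1 := Matrix.nonsing_inv_mul M (isUnit_iff_ne_zero.mpr (ne_of_gt hM.det_pos))
  have hSinv : S * S⁻¹ = 1 := Matrix.mul_nonsing_inv S (isUnit_iff_ne_zero.mpr (ne_of_gt hS.det_pos))
  have : Hᵀ * R⁻¹ = M * (α • (P * Hᵀ * S⁻¹)) := by
    have h2 : M * (α • (P * Hᵀ * S⁻¹)) = (α • (M * (P * Hᵀ))) * S⁻¹ := by
      simp only [Matrix.mul_smul, Matrix.smul_mul, Matrix.mul_assoc]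
    rw [h2, key, Matrix.mul_assoc, hSinv, Matrix.mul_one]
  rw [this, ← Matrix.mul_assoc, hMinv, Matrix.one_mul]
end
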